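/- arXiv:0904.2014 — 2 statements merged into one kernel-verified Lean document; each statement's English description precedes it below -/
import Mathlib

section
/- For a fixed predictor f and fixed n, the number of binary sequences a of length n for which f makes exactly k errors on the first n digits (i.e., (f a)_i ≠ a_i for exactly k indices i < n) equals the binomial coefficient C(n, k). -/
abbrev BinSeq := ℕ → Bool
abbrev Predictor := BinSeq → BinSeq

/-- A predictor is causal: its `n`-th output depends only on the first `n` input digits. -/
def Causal (f : Predictor) : Prop :=
  ∀ (n : ℕ) (a b : BinSeq), (∀ i, i < n → a i = b i) → f a n = f b n

/-- Extend a finite binary sequence by zeros to an infinite one. -/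
def extSeq {n : ℕ} (a : Fin n → Bool) : BinSeq :=
  fun j => if h : j < n then a ⟨j, h⟩ else false

lemma errMap_inj (f : Predictor) (hf : Causal f) (n : ℕ) :
    Function.Injective
      (fun a : Fin n → Bool => fun i : Fin n => xor (a i) (f (extSeq a) i)) := by
  intro a b hab
  have key : ∀ m : ℕ, ∀ i : Fin n, i.val = m → a i = b i := by
    intro m
    induction m using Nat.strong_induction_on with
    | _ m ih =>
      intro i hi
      have hlt : ∀ j, j < (i : ℕ) → extSeq a j = extSeq b j := by
        intro j hj
        have hjn : j < n := lt_trans hj i.isLt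
        simp only [extSeq, dif_pos hjn]
        exact ih j (hi ▸ hj) ⟨j, hjn⟩ rfl
      have hfab : f (extSeq a) i = f (extSeq b) i := hf i _ _ hlt
      have h := congrFun hab i
      simp only at h
      rw [hfab] at h
      cases hv : f (extSeq b) (i : ℕ) <;> rw [hv] at h <;>
        cases ha : a i <;> cases hb : b i <;> simp_all
  funext i
  exact key i.val i rfl

/-- For a fixed causal predictor `f` and fixed `n`, the number of binary sequences of
length `n` on which `f` makes exactly `k` errors equals `C(n, k)`. -/
theorem card_sequences_with_k_errors (f : Predictor) (hf : Causal f) (n k : ℕ) :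
    Nat.card {a : Fin n → Bool //
        (Finset.univ.filter fun i : Fin n => f (extSeq a) i ≠ a i).card = k}
      = n.choose k := by
  set g := fun a : Fin n → Bool => fun i : Fin n => xor (a i) (f (extSeq a) i) with hg
  have hinj := errMap_inj f hf n
  have hbij : Function.Bijective g := (Finite.injective_iff_bijective).mp hinj
  have e1 : {a : Fin n → Bool //
        (Finset.univ.filter fun i : Fin n => f (extSeq a) i ≠ a i).card = k} ≃
      {e : Fin n → Bool // (Finset.univ.filter fun i : Fin n => e i = true).card = k} := by
    refine Equiv.subtypeEquiv (Equiv.ofBijective g hbij) (fun a => ?_)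
    have : (Finset.univ.filter fun i : Fin n => f (extSeq a) i ≠ a i) =
        (Finset.univ.filter fun i : Fin n => g a i = true) := by
      apply Finset.filter_congr
      intro i _
      simp only [hg]
      cases ha : a i <;> cases hb : f (extSeq a) i <;> simp [ha, hb]
    rw [this]
    rfl
  have e2 : {e : Fin n → Bool // (Finset.univ.filter fun i : Fin n => e i = true).card = k} ≃
      {s : Finset (Fin n) // s.card = k} :=
    { toFun := fun e => ⟨Finset.univ.filter fun i => e.1 i = true, e.2⟩
      invFun := fun s => ⟨fun i => decide (i ∈ s.1), by
        simpa using s.2⟩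
      left_inv := fun e => by
        apply Subtype.ext
        funext i
        simp
      right_inv := fun s => by
        apply Subtype.ext
        simp }
  rw [Nat.card_congr (e1.trans e2), Nat.card_eq_fintype_card]
  have := Fintype.card_finset_len (α := Fin n) k
  simp only [Fintype.card_fin] at this
  exact this
end

section
/- For every finite set F̃ of predictors and every ε > 0, there exists N and a binary sequence a of length N such that every predictor f ∈ F̃ has error rate greater than 1/2 − ε on a; moreover N can be chosen depending only on the cardinality of F̃ and on ε, uniformly over all sets of predictors of that cardinality. -/
/-- Error rate of a predictor on a finite binary sequence. -/
noncomputable def errRateFin {n : ℕ} (f : Predictor) (a : Fin n → Bool) : ℝ :=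
  (∑ i : Fin n, if f (extSeq a) i = a i then (0 : ℝ) else 1) / n

/-! ### Auxiliary definitions for the counting argument -/

/-- Centered value of a bit: `1/2` for `true`, `-1/2` for `false`. -/
noncomputable def cW (b : Bool) : ℝ := if b then 1/2 else -(1/2)

lemma cW_sq (b : Bool) : cW b * cW b = 1/4 := by cases b <;> norm_num [cW]

lemma cW_not (b : Bool) : cW (!b) = - cW b := by cases b <;> norm_num [cW]

/-- Weight (number of `true`s) of a finite bit string, as a real. -/
noncomputable def Wr {N : ℕ} (e : Fin N → Bool) : ℝ := ∑ i, if e i then (1:ℝ) else 0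

lemma Wr_sub {N : ℕ} (e : Fin N → Bool) : Wr e - N/2 = ∑ i, cW (e i) := by
  have h : ∀ i : Fin N, cW (e i) = (if e i then (1:ℝ) else 0) - 1/2 := by
    intro i; cases e i <;> norm_num [cW]
  rw [Finset.sum_congr rfl fun i _ => h i, Finset.sum_sub_distrib]
  simp [Wr]
  ring

lemma innerSumCW {N : ℕ} (i j : Fin N) :
    ∑ e : Fin N → Bool, cW (e i) * cW (e j) = if i = j then (2:ℝ)^N / 4 else 0 := by
  split
  · next hij =>
    subst hij
    rw [Finset.sum_congr rfl fun e _ => cW_sq (e i), Finset.sum_const, nsmul_eq_mul,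
      Finset.card_univ, Fintype.card_fun, Fintype.card_bool, Fintype.card_fin]
    push_cast
    ring
  · next hij =>
    apply Finset.sum_involution (fun e _ => Function.update e i (!e i))
    · intro e _
      rw [Function.update_self, Function.update_of_ne (Ne.symm hij), cW_not]
      ring
    · intro e _ hne heq
      apply hne
      have := congrFun heq i
      rw [Function.update_self] at this
      cases e i <;> simp_all
    · intro e _
      funext k
      by_cases hk : k = i
      · subst hk
        simp [Function.update_self]
      · simp [Function.update_of_ne hk]
    · intro e _; exact Finset.mem_univ _

/-- Second moment identity: the variance of the weight over all bit strings. -/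
lemma sum_sq_eq {N : ℕ} :
    ∑ e : Fin N → Bool, (Wr e - (N:ℝ)/2)^2 = (2:ℝ)^N * N / 4 := by
  have h1 : ∀ e : Fin N → Bool,
      (Wr e - N/2)^2 = ∑ i : Fin N, ∑ j : Fin N, cW (e i) * cW (e j) := by
    intro e
    rw [Wr_sub, sq, Finset.sum_mul_sum]
  rw [Finset.sum_congr rfl fun e _ => h1 e, Finset.sum_comm]
  have h2 : ∀ i : Fin N, (∑ e : Fin N → Bool, ∑ j : Fin N, cW (e i) * cW (e j))
      = (2:ℝ)^N / 4 := by
    intro i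
    rw [Finset.sum_comm]
    rw [Finset.sum_congr rfl fun j _ => innerSumCW i j]
    simp
  rw [Finset.sum_congr rfl fun i _ => h2 i, Finset.sum_const, nsmul_eq_mul]
  simp
  ring

/-- The error pattern of a causal predictor on a finite sequence. -/
def Ef {N : ℕ} (f : Predictor) (a : Fin N → Bool) : Fin N → Bool :=
  fun i => f (extSeq a) i != a i

lemma errRateFin_eq_Wr {N : ℕ} (f : Predictor) (a : Fin N → Bool) :
    errRateFin f a = Wr (Ef f a) / N := by
  unfold errRateFin Wr Ef
  congr 1
  apply Finset.sum_congr rfl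
  intro i _
  cases h1 : f (extSeq a) i <;> cases h2 : a i <;> simp [h1, h2]

lemma Ef_injective {N : ℕ} {f : Predictor} (hf : Causal f) :
    Function.Injective (Ef (N := N) f) := by
  intro a b h
  have key : ∀ n : ℕ, ∀ i : Fin N, (i : ℕ) = n → a i = b i := by
    intro n
    induction n using Nat.strong_induction_on with
    | _ n ih =>
      intro i hi
      have hext : ∀ k, k < n → extSeq a k = extSeq b k := by
        intro k hk
        unfold extSeq
        split
        · next hkN => exact ih k hk ⟨k, hkN⟩ rfl
        · rfl
      have hfab : f (extSeq a) n = f (extSeq b) n := hf n _ _ hext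
      have h2 := congrFun h i
      simp only [Ef] at h2
      rw [hi, hfab] at h2
      cases hb : f (extSeq b) n <;> rw [hb] at h2 <;>
        cases ha' : a i <;> cases hb' : b i <;> simp_all
  funext i
  exact key i.val i rfl

/-- For every cardinality bound `p` and every `ε > 0` there is an `N`, depending only on `p`
and `ε`, such that for every set of at most `p` causal predictors there is a binary sequence
of length `N` on which every predictor in the set has error rate greater than `1/2 − ε`. -/
theorem exists_hard_sequence_uniform (p : ℕ) (ε : ℝ) (hε : 0 < ε) :
    ∃ N : ℕ, ∀ S : Set Predictor, S.Finite → Nat.card S ≤ p → (∀ f ∈ S, Causal f) →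
      ∃ a : Fin N → Bool, ∀ f ∈ S, 1 / 2 - ε < errRateFin f a := by
  set N : ℕ := ⌈(p : ℝ) / (4 * ε ^ 2)⌉₊ + 1 with hNdef
  refine ⟨N, ?_⟩
  intro S hS hcard hcausal
  have hN0 : 0 < N := Nat.succ_pos _
  have hN0R : (0 : ℝ) < N := by exact_mod_cast hN0
  have hpN : (p : ℝ) < 4 * ε ^ 2 * N := by
    have h1 : (p : ℝ) / (4 * ε ^ 2) < N := by
      calc (p : ℝ) / (4 * ε ^ 2) ≤ ⌈(p : ℝ) / (4 * ε ^ 2)⌉₊ := Nat.le_ceil _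
        _ < N := by exact_mod_cast Nat.lt_succ_self _
    have h2 : (0 : ℝ) < 4 * ε ^ 2 := by positivity
    rw [div_lt_iff₀ h2] at h1
    linarith [h1]
  -- the Chebyshev bad set of bit strings
  set B : Finset (Fin N → Bool) :=
    Finset.univ.filter (fun e => Wr e ≤ N / 2 - ε * N) with hBdef
  -- Chebyshev bound on |B|
  have hBbound : (B.card : ℝ) * (ε * N) ^ 2 ≤ 2 ^ N * N / 4 := by
    have hstep : ∀ e ∈ B, (ε * N) ^ 2 ≤ (Wr e - N / 2) ^ 2 := by
      intro e he
      rw [hBdef, Finset.mem_filter] at he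
      have hεN : (0:ℝ) ≤ ε * N := by positivity
      have hd : ε * N ≤ (N:ℝ)/2 - Wr e := by linarith [he.2]
      calc (ε * (N:ℝ)) ^ 2 ≤ ((N:ℝ)/2 - Wr e) ^ 2 := pow_le_pow_left₀ hεN hd 2
        _ = (Wr e - (N:ℝ)/2) ^ 2 := by ring
    calc (B.card : ℝ) * (ε * N) ^ 2 = ∑ _e ∈ B, (ε * N) ^ 2 := by
          rw [Finset.sum_const, nsmul_eq_mul]
      _ ≤ ∑ e ∈ B, (Wr e - N / 2) ^ 2 := Finset.sum_le_sum hstep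
      _ ≤ ∑ e : Fin N → Bool, (Wr e - N / 2) ^ 2 := by
          apply Finset.sum_le_sum_of_subset_of_nonneg (Finset.subset_univ _)
          intro e _ _; positivity
      _ = 2 ^ N * N / 4 := sum_sq_eq
  -- bad sequences for a given predictor
  let Bad : Predictor → Finset (Fin N → Bool) :=
    fun f => Finset.univ.filter (fun a => errRateFin f a ≤ 1 / 2 - ε)
  have hBadcard : ∀ f ∈ S, (Bad f).card ≤ B.card := by
    intro f hfS
    apply Finset.card_le_card_of_injOn (Ef f)
    · intro a ha
      simp only [Bad, Finset.mem_coe, Finset.mem_filter] at ha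
      simp only [Finset.mem_coe, hBdef, Finset.mem_filter]
      refine ⟨Finset.mem_univ _, ?_⟩
      have h1 : Wr (Ef f a) / N ≤ 1 / 2 - ε := by
        rw [← errRateFin_eq_Wr]; exact ha.2
      rw [div_le_iff₀ hN0R] at h1
      nlinarith [h1]
    · exact (Ef_injective (hcausal f hfS)).injOn
  -- the union of all bad sets
  set T : Finset (Fin N → Bool) := hS.toFinset.biUnion Bad with hTdef
  have hScard : hS.toFinset.card ≤ p := by
    haveI := hS.fintype
    rwa [Set.Finite.card_toFinset, ← Nat.card_eq_fintype_card]
  have hTcard : T.card ≤ p * B.card := by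
    calc T.card ≤ ∑ f ∈ hS.toFinset, (Bad f).card := Finset.card_biUnion_le
      _ ≤ hS.toFinset.card * B.card := by
          rw [← smul_eq_mul]
          apply Finset.sum_le_card_nsmul
          intro f hf
          exact hBadcard f (hS.mem_toFinset.mp hf)
      _ ≤ p * B.card := Nat.mul_le_mul_right _ hScard
  -- T is a proper subset of all sequences
  have hTlt : T.card < 2 ^ N := by
    have hreal : (T.card : ℝ) < 2 ^ N := by
      have h1 : (T.card : ℝ) ≤ (p : ℝ) * B.card := by
        calc (T.card : ℝ) ≤ ((p * B.card : ℕ) : ℝ) := by exact_mod_cast hTcard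
          _ = (p : ℝ) * B.card := by push_cast; ring
      rcases eq_or_lt_of_le (Nat.cast_nonneg (α := ℝ) B.card) with hB0 | hB0
      · rw [← hB0] at h1
        calc (T.card : ℝ) ≤ (p : ℝ) * 0 := h1
          _ < 2 ^ N := by rw [mul_zero]; positivity
      · -- B.card > 0 case
        have h2 : (ε * N) ^ 2 = ε ^ 2 * N * N := by ring
        have h4 : 4 * ε ^ 2 * N * (B.card : ℝ) ≤ 2 ^ N := by
          nlinarith [hBbound, hN0R]
        have h5 : (p : ℝ) * B.card < 4 * ε ^ 2 * N * B.card :=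
          (mul_lt_mul_of_pos_right hpN hB0)
        linarith
    exact_mod_cast hreal
  have hTne : T ≠ Finset.univ := by
    intro h
    rw [h, Finset.card_univ] at hTlt
    simp [Fintype.card_fun] at hTlt
  obtain ⟨a, -, haT⟩ := Finset.exists_of_ssubset (Finset.ssubset_univ_iff.mpr hTne)
  refine ⟨a, ?_⟩
  intro f hfS
  by_contra hle
  push_neg at hle
  apply haT
  rw [hTdef, Finset.mem_biUnion]
  exact ⟨f, hS.mem_toFinset.mpr hfS, Finset.mem_filter.mpr ⟨Finset.mem_univ _, hle⟩⟩
end
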